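/- Let N be a positive integer, V=[N], A⊆{unordered pairs of V}, and d a nonnegative integer sequence of length N. Let a,v∈V. If N_{av}(d)>0, then P_{av}(d) = d_v · ( ∑_{b∈A*(v)} R_{ba}(d−e_v) · (1−P_{bv}(d−e_b−e_v)) / (1−P_{av}(d−e_a−e_v)) )^{−1}, where all quantities appearing are well defined (in particular N(d−e_c−e_v)>0 for c=a and for every b∈A*(v)). -/

import Mathlib

open scoped Classical

/-- Degree of vertex `i` in the edge set `E`. -/
noncomputable def degC {N : ℕ} (E : Finset (Sym2 (Fin N))) (i : Fin N) : ℕ :=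
  (E.filter (fun e => i ∈ e)).card

/-- `N(d)`: the number of simple graphs on `[N]` with all edges in the allowable set `A`
realising the (integer) degree sequence `d`. -/
noncomputable def Ncnt (N : ℕ) (A : Set (Sym2 (Fin N))) (d : Fin N → ℤ) : ℕ :=
  Nat.card {E : Finset (Sym2 (Fin N)) //
    ↑E ⊆ A ∧ (∀ e ∈ E, ¬ e.IsDiag) ∧ ∀ i, (degC E i : ℤ) = d i}

/-- `N_F(d)`: the number of such graphs whose edge set contains `F`. -/
noncomputable def NcntF (N : ℕ) (A : Set (Sym2 (Fin N))) (F : Finset (Sym2 (Fin N)))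
    (d : Fin N → ℤ) : ℕ :=
  Nat.card {E : Finset (Sym2 (Fin N)) //
    F ⊆ E ∧ ↑E ⊆ A ∧ (∀ e ∈ E, ¬ e.IsDiag) ∧ ∀ i, (degC E i : ℤ) = d i}

/-- `P_{av}(d) = N_{av}(d)/N(d)`. -/
noncomputable def Pedge (N : ℕ) (A : Set (Sym2 (Fin N))) (a v : Fin N) (d : Fin N → ℤ) : ℝ :=
  (NcntF N A {s(a, v)} d : ℝ) / (Ncnt N A d : ℝ)

/-- The elementary unit vector `e_i`. -/
def unitV {N : ℕ} (i : Fin N) : Fin N → ℤ := fun j => if j = i then 1 else 0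

/-- `R_{ab}(d) = N(d - e_a)/N(d - e_b)`. -/
noncomputable def Rrat (N : ℕ) (A : Set (Sym2 (Fin N))) (a b : Fin N) (d : Fin N → ℤ) : ℝ :=
  (Ncnt N A (d - unitV a) : ℝ) / (Ncnt N A (d - unitV b) : ℝ)

/-- `A*(v)`: the set of `b` with `bv ∈ A` and `N_{bv}(d) > 0`. -/
noncomputable def Astar (N : ℕ) (A : Set (Sym2 (Fin N))) (v : Fin N) (d : Fin N → ℤ) :
    Finset (Fin N) :=
  Finset.univ.filter (fun b => s(b, v) ∈ A ∧ 0 < NcntF N A {s(b, v)} d)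

namespace Stmt13

variable {N : ℕ}

def good (A : Set (Sym2 (Fin N))) (d : Fin N → ℤ) (E : Finset (Sym2 (Fin N))) : Prop :=
  ↑E ⊆ A ∧ (∀ e ∈ E, ¬ e.IsDiag) ∧ ∀ i, (degC E i : ℤ) = d i

lemma ncnt_eq (A : Set (Sym2 (Fin N))) (d : Fin N → ℤ) :
    Ncnt N A d = (Finset.univ.filter (fun E : Finset (Sym2 (Fin N)) => good A d E)).card := by
  rw [Ncnt, Nat.card_eq_fintype_card, Fintype.card_subtype]
  congr 1
  ext E
  rw [Finset.mem_filter, Finset.mem_filter]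
  simp [good]

lemma ncntF_eq (A : Set (Sym2 (Fin N))) (s : Sym2 (Fin N)) (d : Fin N → ℤ) :
    NcntF N A {s} d = (Finset.univ.filter
      (fun E : Finset (Sym2 (Fin N)) => s ∈ E ∧ good A d E)).card := by
  rw [NcntF, Nat.card_eq_fintype_card, Fintype.card_subtype]
  congr 1
  ext E
  rw [Finset.mem_filter, Finset.mem_filter]
  simp [Finset.singleton_subset_iff, good]

lemma degC_erase (E : Finset (Sym2 (Fin N))) (e : Sym2 (Fin N)) (he : e ∈ E) (i : Fin N) :
    (degC (E.erase e) i : ℤ) = degC E i - (if i ∈ e then 1 else 0) := by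
  unfold degC
  rw [Finset.filter_erase]
  by_cases h : i ∈ e
  · have hm : e ∈ E.filter (fun e => i ∈ e) := Finset.mem_filter.2 ⟨he, h⟩
    rw [Finset.card_erase_of_mem hm, if_pos h]
    have : 0 < (E.filter (fun e => i ∈ e)).card := Finset.card_pos.2 ⟨e, hm⟩
    push_cast [Nat.cast_sub this]
    ring
  · have hnm : e ∉ E.filter (fun e => i ∈ e) := fun hc => h (Finset.mem_filter.1 hc).2
    rw [Finset.erase_eq_of_notMem hnm, if_neg h]
    ring

lemma degC_insert (E : Finset (Sym2 (Fin N))) (e : Sym2 (Fin N)) (he : e ∉ E) (i : Fin N) :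
    (degC (insert e E) i : ℤ) = degC E i + (if i ∈ e then 1 else 0) := by
  unfold degC
  rw [Finset.filter_insert]
  by_cases h : i ∈ e
  · rw [if_pos h, Finset.card_insert_of_notMem (fun hc => he (Finset.mem_filter.1 hc).1),
      if_pos h]
    push_cast
    ring
  · rw [if_neg h, if_neg h]
    ring


lemma card_filter_split {α : Type*} [DecidableEq α] (s : Finset α) (p q : α → Prop) :
    (s.filter fun x => q x ∧ p x).card + (s.filter fun x => ¬ q x ∧ p x).card
      = (s.filter p).card := by
  have h1 : s.filter (fun x => q x ∧ p x) = (s.filter p).filter q := by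
    ext x; simp only [Finset.mem_filter]; tauto
  have h2 : s.filter (fun x => ¬ q x ∧ p x) = (s.filter p).filter (fun x => ¬ q x) := by
    ext x; simp only [Finset.mem_filter]; tauto
  rw [h1, h2]
  exact Finset.card_filter_add_card_filter_not _

/-- The fundamental recursion: removing/adding the edge `av`. -/
lemma ncnt_rec (A : Set (Sym2 (Fin N))) (a v : Fin N) (hav : a ≠ v) (hA : s(a, v) ∈ A)
    (d : Fin N → ℤ) :
    Ncnt N A (d - unitV a - unitV v)
      = NcntF N A {s(a, v)} d + NcntF N A {s(a, v)} (d - unitV a - unitV v) := by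
  set d' := d - unitV a - unitV v with hd'
  have hsub : ∀ i : Fin N,
      d' i = d i - (if i ∈ s(a, v) then (1 : ℤ) else 0) := by
    intro i
    have : (if i ∈ s(a, v) then (1 : ℤ) else 0)
        = (if i = a then (1 : ℤ) else 0) + (if i = v then (1 : ℤ) else 0) := by
      by_cases h1 : i = a
      · subst h1; simp [Sym2.mem_iff, hav]
      · by_cases h2 : i = v
        · subst h2; simp [Sym2.mem_iff, h1]
        · simp [Sym2.mem_iff, h1, h2]
    rw [this, hd']
    simp only [Pi.sub_apply, unitV]
    ring
  have hbij :
      (Finset.univ.filter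
          (fun E : Finset (Sym2 (Fin N)) => ¬ s(a, v) ∈ E ∧ good A d' E)).card
        = (Finset.univ.filter
          (fun E : Finset (Sym2 (Fin N)) => s(a, v) ∈ E ∧ good A d E)).card := by
    apply Finset.card_bij (fun E _ => insert s(a, v) E)
    · intro E hE
      simp only [Finset.mem_filter, Finset.mem_univ, true_and] at hE ⊢
      obtain ⟨hmem, hEA, hdiag, hdeg⟩ := hE
      refine ⟨Finset.mem_insert_self _ _, ?_, ?_, ?_⟩
      · intro e he
        rcases Finset.mem_insert.1 he with rfl | he
        · exact hA
        · exact hEA he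
      · intro e he
        rcases Finset.mem_insert.1 he with rfl | he
        · simp [Sym2.mk_isDiag_iff, hav]
        · exact hdiag e he
      · intro i
        rw [degC_insert E _ hmem i, hdeg i, hsub i]
        ring
    · intro E hE E' hE' h
      simp only [Finset.mem_filter, Finset.mem_univ, true_and] at hE hE'
      have := congrArg (fun t => Finset.erase t s(a, v)) h
      simpa [Finset.erase_insert hE.1, Finset.erase_insert hE'.1] using this
    · intro E hE
      simp only [Finset.mem_filter, Finset.mem_univ, true_and] at hE
      obtain ⟨hmem, hEA, hdiag, hdeg⟩ := hE
      refine ⟨E.erase s(a, v), ?_, ?_⟩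
      · simp only [Finset.mem_filter, Finset.mem_univ, true_and]
        refine ⟨Finset.notMem_erase _ _, ?_, ?_, ?_⟩
        · exact fun e he => hEA (Finset.erase_subset _ _ he)
        · exact fun e he => hdiag e (Finset.erase_subset _ _ he)
        · intro i
          rw [degC_erase E _ hmem i, hdeg i, hsub i]
      · exact Finset.insert_erase hmem
  have h1 : (Finset.univ.filter
        (fun E : Finset (Sym2 (Fin N)) => s(a, v) ∈ E ∧ good A d' E)).card
      + (Finset.univ.filter
        (fun E : Finset (Sym2 (Fin N)) => ¬ s(a, v) ∈ E ∧ good A d' E)).card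
      = (Finset.univ.filter (fun E : Finset (Sym2 (Fin N)) => good A d' E)).card := by
    have h := card_filter_split Finset.univ (good A d')
      (fun E : Finset (Sym2 (Fin N)) => s(a, v) ∈ E)
    convert h using 3 <;> · ext E; simp
  rw [ncnt_eq, ncntF_eq, ncntF_eq, ← hbij, ← h1]
  exact Nat.add_comm _ _


lemma card_nbrs (E : Finset (Sym2 (Fin N))) (v : Fin N) :
    (Finset.univ.filter (fun b => s(b, v) ∈ E)).card = degC E v := by
  unfold degC
  apply Finset.card_bij (fun b _ => s(b, v))
  · intro b hb
    simp only [Finset.mem_filter, Finset.mem_univ, true_and] at hb ⊢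
    exact ⟨hb, Sym2.mem_mk_right b v⟩
  · intro b hb b' hb' h
    rcases Sym2.eq_iff.1 h with ⟨h1, -⟩ | ⟨h1, h2⟩
    · exact h1
    · exact h1.trans h2
  · intro e he
    simp only [Finset.mem_filter] at he
    obtain ⟨heE, hv⟩ := he
    refine ⟨Sym2.Mem.other hv, ?_, ?_⟩
    · simp only [Finset.mem_filter, Finset.mem_univ, true_and]
      rwa [Sym2.eq_swap, Sym2.other_spec hv]
    · rw [Sym2.eq_swap, Sym2.other_spec hv]

lemma handshake (A : Set (Sym2 (Fin N))) (v : Fin N) (d : Fin N → ℤ) :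
    ∑ b : Fin N, (NcntF N A {s(b, v)} d : ℤ) = d v * Ncnt N A d := by
  have key : ∀ b : Fin N, (Finset.univ.filter
        (fun E : Finset (Sym2 (Fin N)) => s(b, v) ∈ E ∧ good A d E))
      = (Finset.univ.filter (fun E : Finset (Sym2 (Fin N)) => good A d E)).filter
        (fun E => s(b, v) ∈ E) := by
    intro b
    ext E
    simp only [Finset.mem_filter, Finset.mem_univ, true_and]
    tauto
  calc ∑ b : Fin N, (NcntF N A {s(b, v)} d : ℤ)
      = ∑ b : Fin N, ∑ E ∈ Finset.univ.filter
          (fun E : Finset (Sym2 (Fin N)) => good A d E),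
          (if s(b, v) ∈ E then (1 : ℤ) else 0) := by
        refine Finset.sum_congr rfl fun b _ => ?_
        rw [ncntF_eq, key b]
        exact (Finset.sum_boole _ _).symm
    _ = ∑ E ∈ Finset.univ.filter (fun E : Finset (Sym2 (Fin N)) => good A d E),
          ∑ b : Fin N, (if s(b, v) ∈ E then (1 : ℤ) else 0) := Finset.sum_comm
    _ = ∑ E ∈ Finset.univ.filter (fun E : Finset (Sym2 (Fin N)) => good A d E), d v := by
        refine Finset.sum_congr rfl fun E hE => ?_
        rw [Finset.sum_boole, card_nbrs E v]
        obtain ⟨-, -, hdeg⟩ := (Finset.mem_filter.1 hE).2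
        exact hdeg v
    _ = d v * Ncnt N A d := by
        rw [Finset.sum_const, ncnt_eq]
        ring

lemma exists_good_of_pos {A : Set (Sym2 (Fin N))} {s : Sym2 (Fin N)} {d : Fin N → ℤ}
    (h : 0 < NcntF N A {s} d) :
    ∃ E : Finset (Sym2 (Fin N)), s ∈ E ∧ good A d E := by
  rw [ncntF_eq] at h
  obtain ⟨E, hE⟩ := Finset.card_pos.1 h
  exact ⟨E, (Finset.mem_filter.1 hE).2⟩

lemma ncntF_zero_of_not_mem {A : Set (Sym2 (Fin N))} {s : Sym2 (Fin N)} (hs : s ∉ A)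
    (d : Fin N → ℤ) : NcntF N A {s} d = 0 := by
  rw [ncntF_eq, Finset.card_eq_zero, Finset.eq_empty_iff_forall_notMem]
  intro E hE
  obtain ⟨hsE, hEA, -, -⟩ := Finset.mem_filter.1 hE |>.2
  exact hs (hEA hsE)

lemma ncnt_pos_of_good {A : Set (Sym2 (Fin N))} {d : Fin N → ℤ} {E : Finset (Sym2 (Fin N))}
    (h : good A d E) : 0 < Ncnt N A d := by
  rw [ncnt_eq]
  exact Finset.card_pos.2 ⟨E, Finset.mem_filter.2 ⟨Finset.mem_univ _, h⟩⟩

end Stmt13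

open Stmt13 in
/-- Recursive relation for the edge probability `P_{av}(d)` (Proposition 3.1(a)). -/
theorem stmt_13 (N : ℕ) (hN : 0 < N) (A : Set (Sym2 (Fin N))) (d : Fin N → ℤ)
    (hd : ∀ i, 0 ≤ d i) (a v : Fin N)
    (hpos : 0 < NcntF N A {s(a, v)} d) :
    0 < Ncnt N A (d - unitV a - unitV v) ∧
    (∀ b ∈ Astar N A v d, 0 < Ncnt N A (d - unitV b - unitV v)) ∧
    Pedge N A a v d =
      (d v : ℝ) * (∑ b ∈ Astar N A v d,
        Rrat N A b a (d - unitV v) *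
          (1 - Pedge N A b v (d - unitV b - unitV v)) /
          (1 - Pedge N A a v (d - unitV a - unitV v)))⁻¹ := by
  obtain ⟨E₀, hsE₀, hgood₀⟩ := exists_good_of_pos hpos
  have hav : a ≠ v := fun h => (hgood₀.2.1 _ hsE₀) (Sym2.mk_isDiag_iff.2 h)
  have hAav : s(a, v) ∈ A := hgood₀.1 hsE₀
  have haStar : a ∈ Astar N A v d := by
    rw [Astar, Finset.mem_filter]
    exact ⟨Finset.mem_univ _, hAav, hpos⟩
  have hn : 0 < Ncnt N A d := ncnt_pos_of_good hgood₀
  have hdv : 0 < d v := by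
    have h1 : 0 < degC E₀ v := Finset.card_pos.2
      ⟨s(a, v), Finset.mem_filter.2 ⟨hsE₀, Sym2.mem_mk_right a v⟩⟩
    have := hgood₀.2.2 v
    omega
  have hkey : ∀ b ∈ Astar N A v d,
      Ncnt N A (d - unitV b - unitV v)
        = NcntF N A {s(b, v)} d + NcntF N A {s(b, v)} (d - unitV b - unitV v) := by
    intro b hb
    rw [Astar, Finset.mem_filter] at hb
    obtain ⟨-, hbA, hbpos⟩ := hb
    obtain ⟨E, hsE, hgood⟩ := exists_good_of_pos hbpos
    have hbv : b ≠ v := fun h => (hgood.2.1 _ hsE) (Sym2.mk_isDiag_iff.2 h)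
    exact ncnt_rec A b v hbv hbA d
  have hmpos : ∀ b ∈ Astar N A v d, 0 < NcntF N A {s(b, v)} d := by
    intro b hb
    rw [Astar, Finset.mem_filter] at hb
    exact hb.2.2
  have hnn : ∀ b ∈ Astar N A v d, 0 < Ncnt N A (d - unitV b - unitV v) := by
    intro b hb
    have h1 := hkey b hb
    have h2 := hmpos b hb
    omega
  refine ⟨hnn a haStar, hnn, ?_⟩
  -- the probability complement formula
  have hterm : ∀ c ∈ Astar N A v d,
      1 - Pedge N A c v (d - unitV c - unitV v)
        = (NcntF N A {s(c, v)} d : ℝ) / (Ncnt N A (d - unitV c - unitV v) : ℝ) := by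
    intro c hc
    have h1 := hkey c hc
    have h2 : (0 : ℝ) < (Ncnt N A (d - unitV c - unitV v) : ℝ) := by
      exact_mod_cast hnn c hc
    have h3 : ((Ncnt N A (d - unitV c - unitV v) : ℝ))
        = (NcntF N A {s(c, v)} d : ℝ)
          + (NcntF N A {s(c, v)} (d - unitV c - unitV v) : ℝ) := by
      exact_mod_cast congrArg (Nat.cast : ℕ → ℝ) h1
    rw [Pedge]
    field_simp
    linarith
  have hswap : ∀ c : Fin N, d - unitV v - unitV c = d - unitV c - unitV v := fun c =>
    sub_right_comm d (unitV v) (unitV c)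
  have hsum : ∑ b ∈ Astar N A v d,
      Rrat N A b a (d - unitV v) *
        (1 - Pedge N A b v (d - unitV b - unitV v)) /
        (1 - Pedge N A a v (d - unitV a - unitV v))
      = ∑ b ∈ Astar N A v d,
        (NcntF N A {s(b, v)} d : ℝ) / (NcntF N A {s(a, v)} d : ℝ) := by
    refine Finset.sum_congr rfl fun b hb => ?_
    have hnb : (0 : ℝ) < (Ncnt N A (d - unitV b - unitV v) : ℝ) := by
      exact_mod_cast hnn b hb
    have hna : (0 : ℝ) < (Ncnt N A (d - unitV a - unitV v) : ℝ) := by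
      exact_mod_cast hnn a haStar
    have hmb : (0 : ℝ) < (NcntF N A {s(b, v)} d : ℝ) := by exact_mod_cast hmpos b hb
    have hma : (0 : ℝ) < (NcntF N A {s(a, v)} d : ℝ) := by exact_mod_cast hpos
    rw [hterm b hb, hterm a haStar, Rrat, hswap a, hswap b]
    field_simp
  have hs2 : ∑ b ∈ Astar N A v d, (NcntF N A {s(b, v)} d : ℤ) = d v * Ncnt N A d := by
    rw [← handshake A v d]
    symm
    refine (Finset.sum_subset (Finset.subset_univ _) ?_).symm
    intro b _ hnb
    simp only [Astar, Finset.mem_filter, Finset.mem_univ, true_and, not_and, not_lt,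
      Nat.le_zero] at hnb
    by_cases hA' : s(b, v) ∈ A
    · exact_mod_cast hnb hA'
    · exact_mod_cast ncntF_zero_of_not_mem hA' d
  have hs3 : ∑ b ∈ Astar N A v d, (NcntF N A {s(b, v)} d : ℝ)
      = (d v : ℝ) * (Ncnt N A d : ℝ) := by
    exact_mod_cast congrArg (Int.cast : ℤ → ℝ) hs2
  rw [hsum, ← Finset.sum_div, hs3, Pedge]
  have hdv' : (0 : ℝ) < (d v : ℝ) := by exact_mod_cast hdv
  have hn' : (0 : ℝ) < (Ncnt N A d : ℝ) := by exact_mod_cast hn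
  have hma : (0 : ℝ) < (NcntF N A {s(a, v)} d : ℝ) := by exact_mod_cast hpos
  field_simp
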